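/- In the symmetric group Sym(n) with generating set S = Sym(n) \ {e, σ, σ⁻¹} where σ = (1 2 … n) is the n-cycle and n ≥ 5: |σ| = 2 and Av(σ) = (n! + 2n - 6)/(n! - 3). In particular Av(σ) → 1 as n → ∞ and κ(σ) = (2 - Av(σ))/2 → 1/2. -/

import Mathlib

open Filter Topology

section WL
variable {G : Type*} [Group G]

/-- Word length of `g` with respect to a generating set `S`. -/
noncomputable def wl (S : Set G) (g : G) : ℕ :=
  sInf {n | ∃ l : List G, (∀ x ∈ l, x ∈ S) ∧ l.length = n ∧ l.prod = g}

/-- Average word length of conjugates of `g` by elements of `S`. -/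
noncomputable def Av (S : Finset G) (g : G) : ℝ :=
  (∑ a ∈ S, (wl (S : Set G) (a⁻¹ * g * a) : ℝ)) / S.card

/-- Medium-scale Ricci curvature `κ(g) = (|g| - Av(g))/|g|`. -/
noncomputable def curv (S : Finset G) (g : G) : ℝ :=
  ((wl (S : Set G) g : ℝ) - Av S g) / (wl (S : Set G) g)

end WL

/-- The generating set `Sym(n) \ {e, σ, σ⁻¹}` where `σ` is the `n`-cycle. -/
noncomputable def Spos (n : ℕ) : Finset (Equiv.Perm (Fin n)) :=
  Finset.univ \ {1, finRotate n, (finRotate n)⁻¹}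

section Aux
open Equiv
open Fin.NatCast Fin.CommRing

section WLlem
variable {G : Type*} [Group G] {S : Set G} {g : G}

lemma wl_eq_one (hgS : g ∈ S) (hg1 : g ≠ 1) : wl S g = 1 := by
  refine le_antisymm (Nat.sInf_le ⟨[g], by simp [hgS]⟩) ?_
  refine le_csInf ⟨1, ⟨[g], by simp [hgS]⟩⟩ ?_
  rintro b ⟨l, -, rfl, hp⟩
  match l with
  | [] => exact absurd hp.symm hg1
  | a :: t => simp

lemma wl_eq_two (hg1 : g ≠ 1) (hgS : g ∉ S) {x y : G} (hx : x ∈ S) (hy : y ∈ S)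
    (hxy : x * y = g) : wl S g = 2 := by
  refine le_antisymm (Nat.sInf_le ⟨[x, y], by simp [hx, hy, hxy]⟩) ?_
  refine le_csInf ⟨2, ⟨[x, y], by simp [hx, hy, hxy]⟩⟩ ?_
  rintro b ⟨l, hl, rfl, hp⟩
  match l with
  | [] => exact absurd hp.symm hg1
  | [a] => simp at hp; exact absurd (hp ▸ hl a (by simp)) hgS
  | a :: b :: t => simp

lemma rot_pow_apply (n m : ℕ) (i : Fin (n+1)) :
    ((finRotate (n+1)) ^ m) i = i + (m : Fin (n+1)) := by
  induction m with
  | zero => simp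
  | succ k ih =>
    rw [pow_succ', Perm.mul_apply, ih, finRotate_succ_apply]
    push_cast
    rw [add_assoc]

lemma commute_rot (n : ℕ) {τ : Perm (Fin (n+1))}
    (h : τ * finRotate (n+1) = finRotate (n+1) * τ) :
    τ = (finRotate (n+1)) ^ ((τ 0 : Fin (n+1)) : ℕ) := by
  have key : ∀ m : ℕ, τ ((m : Fin (n+1))) = τ 0 + (m : Fin (n+1)) := by
    intro m
    induction m with
    | zero => simp
    | succ k ih =>
      have h1 : ((k+1 : ℕ) : Fin (n+1)) = (k : Fin (n+1)) + 1 := by push_cast; ring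
      have h2 := congr_arg (fun p : Perm (Fin (n+1)) => p ((k : Fin (n+1)))) h
      simp only [Perm.mul_apply, finRotate_succ_apply] at h2
      rw [h1, h2, ih, add_assoc]
  refine Equiv.ext fun i => ?_
  rw [rot_pow_apply, Fin.cast_val_eq_self]
  have := key i.val
  rw [Fin.cast_val_eq_self] at this
  rw [this]; exact add_comm _ _

lemma neg_conj (n : ℕ) :
    (Equiv.neg (Fin (n+1)))⁻¹ * finRotate (n+1) * (Equiv.neg (Fin (n+1))) = (finRotate (n+1))⁻¹ := by
  refine Equiv.ext fun i => ?_
  have h2 : (finRotate (n+1))⁻¹ i = i - 1 := by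
    rw [Perm.inv_eq_iff_eq, finRotate_succ_apply, sub_add_cancel]
  simp only [Perm.mul_apply, h2, Equiv.neg_apply, finRotate_succ_apply]
  show (Equiv.neg (Fin (n+1))).symm _ = _
  rw [Equiv.symm_apply_eq, Equiv.neg_apply]
  ring

lemma card_Cset (n : ℕ) :
    (Finset.univ.filter fun a : Perm (Fin (n+1)) =>
      a⁻¹ * finRotate (n+1) * a = finRotate (n+1)).card = n + 1 := by
  have himg : (Finset.univ.filter fun a : Perm (Fin (n+1)) =>
      a⁻¹ * finRotate (n+1) * a = finRotate (n+1)) =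
      Finset.univ.image (fun k : Fin (n+1) => (finRotate (n+1)) ^ (k : ℕ)) := by
    ext a
    simp only [Finset.mem_filter, Finset.mem_univ, true_and, Finset.mem_image]
    constructor
    · intro h
      have hc : a * finRotate (n+1) = finRotate (n+1) * a := by
        have := congr_arg (fun p => a * p) h
        simpa [mul_assoc] using this.symm
      exact ⟨a 0, (commute_rot n hc).symm⟩
    · rintro ⟨k, rfl⟩
      group
  rw [himg, Finset.card_image_of_injective _ ?_, Finset.card_univ, Fintype.card_fin]
  intro j k hjk
  have := congr_arg (fun p : Perm (Fin (n+1)) => p 0) hjk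
  simpa [rot_pow_apply, Fin.cast_val_eq_self] using this

lemma card_Rset (n : ℕ) :
    (Finset.univ.filter fun a : Perm (Fin (n+1)) =>
      a⁻¹ * finRotate (n+1) * a = (finRotate (n+1))⁻¹).card = n + 1 := by
  have h : (Finset.univ.filter fun a : Perm (Fin (n+1)) =>
      a⁻¹ * finRotate (n+1) * a = (finRotate (n+1))⁻¹).card =
      (Finset.univ.filter fun a : Perm (Fin (n+1)) =>
      a⁻¹ * finRotate (n+1) * a = finRotate (n+1)).card := by
    apply Finset.card_bij' (fun b _ => b * (Equiv.neg (Fin (n+1)))⁻¹)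
      (fun a _ => a * (Equiv.neg (Fin (n+1))))
    · intro b hb
      simp only [Finset.mem_filter, Finset.mem_univ, true_and] at hb ⊢
      have := neg_conj n
      rw [mul_inv_rev, inv_inv]
      calc (Equiv.neg (Fin (n+1))) * b⁻¹ * finRotate (n+1) * (b * (Equiv.neg (Fin (n+1)))⁻¹)
          = (Equiv.neg (Fin (n+1))) * (b⁻¹ * finRotate (n+1) * b) * (Equiv.neg (Fin (n+1)))⁻¹ := by
            group
        _ = finRotate (n+1) := by rw [hb, ← this]; group
    · intro a ha
      simp only [Finset.mem_filter, Finset.mem_univ, true_and] at ha ⊢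
      rw [mul_inv_rev]
      calc (Equiv.neg (Fin (n+1)))⁻¹ * a⁻¹ * finRotate (n+1) * (a * (Equiv.neg (Fin (n+1))))
          = (Equiv.neg (Fin (n+1)))⁻¹ * (a⁻¹ * finRotate (n+1) * a) * (Equiv.neg (Fin (n+1))) := by
            group
        _ = (finRotate (n+1))⁻¹ := by rw [ha]; exact neg_conj n
    · intro b _; group
    · intro a _; group
  rw [h, card_Cset]


lemma mem_Spos {N : ℕ} {a : Perm (Fin N)} :
    a ∈ ((Spos N : Finset (Perm (Fin N))) : Set (Perm (Fin N))) ↔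
      a ≠ 1 ∧ a ≠ finRotate N ∧ a ≠ (finRotate N)⁻¹ := by
  simp [Spos]

section pts
variable {m : ℕ}

lemma sigma_ne_one : finRotate (m+4+1) ≠ 1 := by
  intro H
  have h2 : finRotate (m+4+1) ⟨0, by omega⟩ = (1 : Perm (Fin (m+4+1))) ⟨0, by omega⟩ := by rw [H]
  rw [finRotate_of_lt (by omega)] at h2
  simp [Fin.ext_iff] at h2

lemma sigma_ne_inv : finRotate (m+4+1) ≠ (finRotate (m+4+1))⁻¹ := by
  intro H
  have h2 : finRotate (m+4+1) (finRotate (m+4+1) ⟨0, by omega⟩) = ⟨0, by omega⟩ := by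
    nth_rewrite 1 [H]; exact Equiv.symm_apply_apply _ _
  rw [finRotate_of_lt (k:=0) (by omega)] at h2
  rw [finRotate_of_lt (k:=1) (by omega)] at h2
  simp [Fin.ext_iff] at h2

lemma swap_mem :
    Equiv.swap (⟨0, by omega⟩ : Fin (m+4+1)) ⟨1, by omega⟩ ∈
      ((Spos (m+4+1) : Finset (Perm (Fin (m+4+1)))) : Set (Perm (Fin (m+4+1)))) := by
  rw [mem_Spos]
  set x := Equiv.swap (⟨0, by omega⟩ : Fin (m+4+1)) (⟨1, by omega⟩ : Fin (m+4+1)) with hx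
  have hx2 : x ⟨2, by omega⟩ = ⟨2, by omega⟩ :=
    Equiv.swap_apply_of_ne_of_ne (by simp [Fin.ext_iff]) (by simp [Fin.ext_iff])
  refine ⟨?_, ?_, ?_⟩
  · intro H
    have h2 : x ⟨0, by omega⟩ = (1 : Perm (Fin (m+4+1))) ⟨0, by omega⟩ := by rw [H]
    simp only [hx, Equiv.swap_apply_left, Perm.one_apply] at h2
    simp [Fin.ext_iff] at h2
  · intro H
    have h2 := hx2
    rw [H, finRotate_of_lt (by omega)] at h2
    simp [Fin.ext_iff] at h2
  · intro H
    have h2 : finRotate (m+4+1) (x ⟨2, by omega⟩) = ⟨2, by omega⟩ := by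
      rw [H]; simp
    rw [hx2, finRotate_of_lt (by omega)] at h2
    simp [Fin.ext_iff] at h2

lemma y_mem :
    Equiv.swap (⟨0, by omega⟩ : Fin (m+4+1)) ⟨1, by omega⟩ * finRotate (m+4+1) ∈
      ((Spos (m+4+1) : Finset (Perm (Fin (m+4+1)))) : Set (Perm (Fin (m+4+1)))) := by
  rw [mem_Spos]
  set x := Equiv.swap (⟨0, by omega⟩ : Fin (m+4+1)) (⟨1, by omega⟩ : Fin (m+4+1)) with hx
  have hy0 : (x * finRotate (m+4+1)) ⟨0, by omega⟩ = ⟨0, by omega⟩ := by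
    rw [Perm.mul_apply, finRotate_of_lt (by omega)]
    exact Equiv.swap_apply_right _ _
  refine ⟨?_, ?_, ?_⟩
  · intro H
    have h2 : (x * finRotate (m+4+1)) ⟨1, by omega⟩ = (1 : Perm (Fin (m+4+1))) ⟨1, by omega⟩ := by
      rw [H]
    rw [Perm.mul_apply, finRotate_of_lt (by omega),
      Equiv.swap_apply_of_ne_of_ne (by simp [Fin.ext_iff]) (by simp [Fin.ext_iff])] at h2
    simp [Fin.ext_iff] at h2
  · intro H
    have h2 := hy0
    rw [H, finRotate_of_lt (by omega)] at h2
    simp [Fin.ext_iff] at h2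
  · intro H
    have h2 : finRotate (m+4+1) ((x * finRotate (m+4+1)) ⟨0, by omega⟩) = ⟨0, by omega⟩ := by
      rw [H]; simp
    rw [hy0, finRotate_of_lt (by omega)] at h2
    simp [Fin.ext_iff] at h2

end pts

section mainsec
variable {m : ℕ}

lemma inv_mem_Spos {N : ℕ} {a : Perm (Fin N)}
    (ha : a ∈ ((Spos N : Finset (Perm (Fin N))) : Set (Perm (Fin N)))) :
    a⁻¹ ∈ ((Spos N : Finset (Perm (Fin N))) : Set (Perm (Fin N))) := by
  rw [mem_Spos] at ha ⊢
  exact ⟨inv_ne_one.mpr ha.1, fun H => ha.2.2 (inv_eq_iff_eq_inv.mp H),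
    fun H => ha.2.1 (inv_inj.mp H)⟩

lemma sigma_not_mem : finRotate (m+4+1) ∉
    ((Spos (m+4+1) : Finset (Perm (Fin (m+4+1)))) : Set (Perm (Fin (m+4+1)))) := by
  rw [mem_Spos]; simp

lemma sigma_inv_not_mem : (finRotate (m+4+1))⁻¹ ∉
    ((Spos (m+4+1) : Finset (Perm (Fin (m+4+1)))) : Set (Perm (Fin (m+4+1)))) := by
  rw [mem_Spos]; simp

lemma wl_sigma : wl ((Spos (m+4+1) : Finset (Perm (Fin (m+4+1)))) : Set (Perm (Fin (m+4+1))))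
    (finRotate (m+4+1)) = 2 := by
  refine wl_eq_two sigma_ne_one sigma_not_mem swap_mem y_mem ?_
  rw [← mul_assoc, Equiv.swap_mul_self, one_mul]

lemma wl_sigma_inv :
    wl ((Spos (m+4+1) : Finset (Perm (Fin (m+4+1)))) : Set (Perm (Fin (m+4+1))))
    (finRotate (m+4+1))⁻¹ = 2 := by
  refine wl_eq_two (inv_ne_one.mpr sigma_ne_one) sigma_inv_not_mem
    (inv_mem_Spos y_mem) (inv_mem_Spos swap_mem) ?_
  rw [← mul_inv_rev, ← mul_assoc, Equiv.swap_mul_self, one_mul]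

lemma card_Spos : (Spos (m+4+1)).card = (m+4+1).factorial - 3 := by
  have h3 : ({1, finRotate (m+4+1), (finRotate (m+4+1))⁻¹} :
      Finset (Perm (Fin (m+4+1)))).card = 3 := by
    rw [Finset.card_insert_of_notMem (by
        simp [Ne.symm sigma_ne_one, (inv_ne_one.mpr (sigma_ne_one (m := m))).symm]),
      Finset.card_insert_of_notMem (by simp [sigma_ne_inv]), Finset.card_singleton]
  rw [Spos, Finset.card_sdiff_of_subset (Finset.subset_univ _), h3, Finset.card_univ,
    Fintype.card_perm, Fintype.card_fin]

lemma filter_conj_eq :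
    ((Spos (m+4+1)).filter
      (fun a => a⁻¹ * finRotate (m+4+1) * a = finRotate (m+4+1))).card = m + 4 + 1 - 3 := by
  classical
  have heq : (Spos (m+4+1)).filter
      (fun a => a⁻¹ * finRotate (m+4+1) * a = finRotate (m+4+1)) =
      (Finset.univ.filter
        (fun a : Perm (Fin (m+4+1)) => a⁻¹ * finRotate (m+4+1) * a = finRotate (m+4+1))) \
      {1, finRotate (m+4+1), (finRotate (m+4+1))⁻¹} := by
    ext a
    simp only [Spos, Finset.mem_filter, Finset.mem_sdiff, Finset.mem_univ, true_and]
    tauto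
  have hsub : ({1, finRotate (m+4+1), (finRotate (m+4+1))⁻¹} : Finset (Perm (Fin (m+4+1)))) ⊆
      Finset.univ.filter
        (fun a : Perm (Fin (m+4+1)) => a⁻¹ * finRotate (m+4+1) * a = finRotate (m+4+1)) := by
    intro b hb
    simp only [Finset.mem_insert, Finset.mem_singleton] at hb
    simp only [Finset.mem_filter, Finset.mem_univ, true_and]
    rcases hb with rfl | rfl | rfl
    · group
    · group
    · group
  have h3 : ({1, finRotate (m+4+1), (finRotate (m+4+1))⁻¹} :
      Finset (Perm (Fin (m+4+1)))).card = 3 := by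
    rw [Finset.card_insert_of_notMem (by
        simp [Ne.symm sigma_ne_one, (inv_ne_one.mpr (sigma_ne_one (m := m))).symm]),
      Finset.card_insert_of_notMem (by simp [sigma_ne_inv]), Finset.card_singleton]
  rw [heq, Finset.card_sdiff_of_subset hsub, h3, card_Cset]

lemma filter_conj_inv :
    ((Spos (m+4+1)).filter
      (fun a => a⁻¹ * finRotate (m+4+1) * a = (finRotate (m+4+1))⁻¹)).card = m + 4 + 1 := by
  classical
  have heq : (Spos (m+4+1)).filter
      (fun a => a⁻¹ * finRotate (m+4+1) * a = (finRotate (m+4+1))⁻¹) =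
      Finset.univ.filter
        (fun a : Perm (Fin (m+4+1)) => a⁻¹ * finRotate (m+4+1) * a = (finRotate (m+4+1))⁻¹) := by
    ext a
    simp only [Spos, Finset.mem_filter, Finset.mem_sdiff, Finset.mem_univ, true_and,
      Finset.mem_insert, Finset.mem_singleton]
    constructor
    · tauto
    · intro ha
      refine ⟨?_, ha⟩
      rintro (rfl | rfl | rfl)
      · exact sigma_ne_inv (by simpa using ha)
      · exact sigma_ne_inv (by rw [← ha]; group)
      · exact sigma_ne_inv (by rw [← ha]; group)
  rw [heq, card_Rset]

lemma sum_wl :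
    ∑ a ∈ Spos (m+4+1),
      wl ((Spos (m+4+1) : Finset (Perm (Fin (m+4+1)))) : Set (Perm (Fin (m+4+1))))
        (a⁻¹ * finRotate (m+4+1) * a) = (m+4+1).factorial + 2*(m+4+1) - 6 := by
  classical
  have hterm : ∀ a ∈ Spos (m+4+1),
      wl ((Spos (m+4+1) : Finset (Perm (Fin (m+4+1)))) : Set (Perm (Fin (m+4+1))))
        (a⁻¹ * finRotate (m+4+1) * a) =
      if (a⁻¹ * finRotate (m+4+1) * a = finRotate (m+4+1) ∨
          a⁻¹ * finRotate (m+4+1) * a = (finRotate (m+4+1))⁻¹) then 2 else 1 := by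
    intro a _
    by_cases hc : a⁻¹ * finRotate (m+4+1) * a = finRotate (m+4+1) ∨
        a⁻¹ * finRotate (m+4+1) * a = (finRotate (m+4+1))⁻¹
    · rw [if_pos hc]
      rcases hc with h | h
      · rw [h]; exact wl_sigma
      · rw [h]; exact wl_sigma_inv
    · rw [if_neg hc]
      push_neg at hc
      have hne1 : a⁻¹ * finRotate (m+4+1) * a ≠ 1 := by
        intro H
        apply sigma_ne_one (m := m)
        have : finRotate (m+4+1) = a * (a⁻¹ * finRotate (m+4+1) * a) * a⁻¹ := by group
        rw [this, H]; group
      exact wl_eq_one (mem_Spos.mpr ⟨hne1, hc.1, hc.2⟩) hne1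
  rw [Finset.sum_congr rfl hterm, Finset.sum_ite, Finset.sum_const, Finset.sum_const,
    smul_eq_mul, smul_eq_mul, mul_one]
  have hor : (Spos (m+4+1)).filter
      (fun a => a⁻¹ * finRotate (m+4+1) * a = finRotate (m+4+1) ∨
        a⁻¹ * finRotate (m+4+1) * a = (finRotate (m+4+1))⁻¹) =
      ((Spos (m+4+1)).filter
        (fun a => a⁻¹ * finRotate (m+4+1) * a = finRotate (m+4+1))) ∪
      ((Spos (m+4+1)).filter
        (fun a => a⁻¹ * finRotate (m+4+1) * a = (finRotate (m+4+1))⁻¹)) :=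
    Finset.filter_or _ _ _
  have hdisj : Disjoint
      ((Spos (m+4+1)).filter
        (fun a => a⁻¹ * finRotate (m+4+1) * a = finRotate (m+4+1)))
      ((Spos (m+4+1)).filter
        (fun a => a⁻¹ * finRotate (m+4+1) * a = (finRotate (m+4+1))⁻¹)) := by
    rw [Finset.disjoint_left]
    intro a h1 h2
    simp only [Finset.mem_filter] at h1 h2
    rw [h1.2] at h2; exact sigma_ne_inv (m := m) h2.2
  have hcardor : ((Spos (m+4+1)).filter
      (fun a => a⁻¹ * finRotate (m+4+1) * a = finRotate (m+4+1) ∨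
        a⁻¹ * finRotate (m+4+1) * a = (finRotate (m+4+1))⁻¹)).card = 2*(m+4+1) - 3 := by
    rw [hor, Finset.card_union_of_disjoint hdisj, filter_conj_eq, filter_conj_inv]
    omega
  have hsplit := Finset.card_filter_add_card_filter_not
    (s := Spos (m+4+1))
    (p := fun a => a⁻¹ * finRotate (m+4+1) * a = finRotate (m+4+1) ∨
        a⁻¹ * finRotate (m+4+1) * a = (finRotate (m+4+1))⁻¹)
  rw [card_Spos] at hsplit
  rw [hcardor]
  rw [hcardor] at hsplit
  have h1 : (m+4+1).factorial = (m+4+1) * (m+4).factorial := Nat.factorial_succ _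
  have h2 : 24 ≤ (m+4).factorial :=
    le_trans (by norm_num [Nat.factorial]) (Nat.factorial_le (by omega : 4 ≤ m+4))
  have h3 : 24 * (m+4+1) ≤ (m+4+1).factorial := by
    rw [h1, mul_comm]
    exact Nat.mul_le_mul_left _ h2
  omega

lemma fact_big : 120 ≤ (m+4+1).factorial :=
  le_trans (by norm_num [Nat.factorial]) (Nat.factorial_le (by omega : 5 ≤ m+4+1))

lemma Av_eq : Av (Spos (m+4+1)) (finRotate (m+4+1)) =
    (((m+4+1).factorial : ℝ) + 2*((m+4+1):ℝ) - 6) / (((m+4+1).factorial : ℝ) - 3) := by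
  have hF := fact_big (m := m)
  rw [Av, ← Nat.cast_sum, sum_wl, card_Spos]
  rw [Nat.cast_sub (by omega), Nat.cast_sub (by omega)]
  push_cast
  ring_nf

end mainsec

lemma part1 (n : ℕ) (hn : 5 ≤ n) :
    wl ((Spos n : Finset (Equiv.Perm (Fin n))) : Set (Equiv.Perm (Fin n)))
        (finRotate n) = 2 ∧
      Av (Spos n) (finRotate n) =
        ((n.factorial : ℝ) + 2 * n - 6) / ((n.factorial : ℝ) - 3) := by
  obtain ⟨m, rfl⟩ : ∃ m, n = m + 4 + 1 := ⟨n - 5, by omega⟩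
  exact ⟨wl_sigma, by rw [Av_eq]; push_cast; ring_nf⟩

lemma aux_zero : Tendsto (fun n : ℕ => (2*(n:ℝ) - 3)/((n.factorial:ℝ) - 3)) atTop (nhds 0) := by
  have h6 : Tendsto (fun n : ℕ => (6:ℝ)/(n:ℝ)) atTop (nhds 0) :=
    tendsto_const_div_atTop_nhds_zero_nat 6
  apply squeeze_zero' (t₀ := atTop) ?_ ?_ h6
  · filter_upwards [eventually_ge_atTop 5] with n hn
    have hF : 120 ≤ n.factorial :=
      le_trans (by norm_num [Nat.factorial]) (Nat.factorial_le hn)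
    have hF' : (120:ℝ) ≤ (n.factorial:ℝ) := by exact_mod_cast hF
    have hn' : (5:ℝ) ≤ (n:ℝ) := by exact_mod_cast hn
    apply div_nonneg <;> linarith
  · filter_upwards [eventually_ge_atTop 5] with n hn
    obtain ⟨k, rfl⟩ : ∃ k, n = k + 5 := ⟨n - 5, by omega⟩
    have h1 : (k+5)*(k+4) ≤ (k+5).factorial := by
      calc (k+5)*(k+4) ≤ (k+5)*(k+4).factorial :=
            Nat.mul_le_mul_left _ (Nat.self_le_factorial _)
        _ = (k+5).factorial := (Nat.factorial_succ (k+4)).symm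
    have hc : ((k:ℝ)+5)*((k:ℝ)+4) ≤ ((k+5).factorial : ℝ) := by
      have := (Nat.cast_le (α := ℝ)).mpr h1
      push_cast at this
      linarith
    have hFpos : (0:ℝ) < ((k+5).factorial : ℝ) - 3 := by nlinarith
    have hnpos : (0:ℝ) < ((k+5:ℕ):ℝ) := by positivity
    rw [div_le_div_iff₀ hFpos hnpos]
    push_cast
    nlinarith [hc, sq_nonneg (k:ℝ), Nat.cast_nonneg (α := ℝ) k]

lemma Av_tendsto : Tendsto (fun n => Av (Spos n) (finRotate n)) atTop (nhds 1) := by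
  have h1 : Tendsto (fun n : ℕ => 1 + (2*(n:ℝ)-3)/((n.factorial:ℝ)-3)) atTop (nhds 1) := by
    simpa using tendsto_const_nhds.add aux_zero
  apply h1.congr'
  filter_upwards [eventually_ge_atTop 5] with n hn
  rw [(part1 n hn).2]
  have hF : (120:ℝ) ≤ (n.factorial:ℝ) := by
    exact_mod_cast le_trans (by norm_num [Nat.factorial]) (Nat.factorial_le hn)
  have hne : (n.factorial:ℝ) - 3 ≠ 0 := by linarith
  field_simp
  ring

lemma curv_tendsto : Tendsto (fun n => curv (Spos n) (finRotate n)) atTop (nhds (1/2)) := by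
  have h2 : Tendsto (fun n => ((2:ℝ) - Av (Spos n) (finRotate n))/2) atTop (nhds ((2-1)/2)) :=
    (tendsto_const_nhds.sub Av_tendsto).div_const 2
  norm_num at h2
  apply h2.congr'
  filter_upwards [eventually_ge_atTop 5] with n hn
  rw [curv, (part1 n hn).1]
  norm_num

end WLlem
end Aux

theorem stmt5 :
    (∀ n : ℕ, 5 ≤ n →
        wl ((Spos n : Finset (Equiv.Perm (Fin n))) : Set (Equiv.Perm (Fin n)))
            (finRotate n) = 2 ∧
          Av (Spos n) (finRotate n) =
            ((n.factorial : ℝ) + 2 * n - 6) / ((n.factorial : ℝ) - 3)) ∧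
      Tendsto (fun n => Av (Spos n) (finRotate n)) atTop (nhds 1) ∧
      Tendsto (fun n => curv (Spos n) (finRotate n)) atTop (nhds (1 / 2)) := by
  exact ⟨fun n hn => part1 n hn, Av_tendsto, curv_tendsto⟩
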